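/- arXiv:2007.13108 — 5 statements merged into one kernel-verified Lean document; each statement's English description precedes it below -/
import Mathlib

section
/- If A is a positive semi-definite n×n matrix whose off-diagonal entries are all non-positive and whose diagonal entries are at most 1, then A ⪯ 2·diag(A) (and in particular A ⪯ 2·Id). More precisely, for any u ∈ ℝ^n, ⟨u, A u⟩ ≤ 2⟨u, diag(A) u⟩. -/
open Finset

/-- If `A` is PSD with non-positive off-diagonal entries and diagonal entries at most `1`,
then `⟨u, A u⟩ ≤ 2⟨u, diag(A) u⟩`, and in particular `A ⪯ 2·Id`. -/
theorem stmt4 {n : ℕ} (A : Matrix (Fin n) (Fin n) ℝ) (hA : A.PosSemidef)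
    (hoff : ∀ i j, i ≠ j → A i j ≤ 0) (hdiag : ∀ i, A i i ≤ 1)
    (u : Fin n → ℝ) :
    (∑ i, ∑ j, u i * A i j * u j) ≤ 2 * ∑ i, A i i * (u i) ^ 2 ∧
    (∑ i, ∑ j, u i * A i j * u j) ≤ 2 * ∑ i, (u i) ^ 2 := by
  set Q : (Fin n → ℝ) → ℝ := fun v => ∑ i, ∑ j, v i * A i j * v j with hQ
  have hQnonneg : ∀ v : Fin n → ℝ, 0 ≤ Q v := by
    intro v
    have h := hA.dotProduct_mulVec_nonneg v
    have : dotProduct v (A.mulVec v) = Q v := by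
      simp [Q, dotProduct, Matrix.mulVec, Finset.mul_sum, mul_assoc]
    rwa [← this]
  -- diagonal entries are nonnegative
  have hdiag0 : ∀ i, 0 ≤ A i i := by
    intro i
    have h := hQnonneg (Pi.single i 1)
    simpa [Q, Pi.single_apply, Finset.sum_ite_eq', Finset.mul_sum] using h
  set p : Fin n → ℝ := fun i => max (u i) 0 with hp
  set m : Fin n → ℝ := fun i => min (u i) 0 with hm
  have hpm : ∀ i, p i + m i = u i := by
    intro i; simp [hp, hm, max_add_min]
  -- parallelogram-type identity
  have hpar : Q u + Q (fun i => p i - m i) = 2 * Q p + 2 * Q m := by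
    simp only [Q]
    rw [Finset.mul_sum, Finset.mul_sum, ← Finset.sum_add_distrib, ← Finset.sum_add_distrib]
    refine Finset.sum_congr rfl fun i _ => ?_
    rw [Finset.mul_sum, Finset.mul_sum, ← Finset.sum_add_distrib, ← Finset.sum_add_distrib]
    refine Finset.sum_congr rfl fun j _ => ?_
    rw [← hpm i, ← hpm j]
    ring
  have hconv : Q u ≤ 2 * Q p + 2 * Q m := by
    have := hQnonneg (fun i => p i - m i)
    linarith
  -- domination by diagonal for sign-coherent vectors
  have hdom : ∀ v : Fin n → ℝ, (∀ i j, 0 ≤ v i * v j) → Q v ≤ ∑ i, A i i * v i ^ 2 := by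
    intro v hv
    refine Finset.sum_le_sum fun i _ => ?_
    rw [← Finset.add_sum_erase _ _ (Finset.mem_univ i)]
    have hle : ∑ j ∈ univ.erase i, v i * A i j * v j ≤ 0 := by
      refine Finset.sum_nonpos fun j hj => ?_
      have hji : j ≠ i := Finset.ne_of_mem_erase hj
      have h1 := hoff i j (Ne.symm hji)
      have h2 := hv i j
      nlinarith
    nlinarith
  have hqp : Q p ≤ ∑ i, A i i * p i ^ 2 := by
    refine hdom p fun i j => ?_
    exact mul_nonneg (le_max_right _ _) (le_max_right _ _)
  have hqm : Q m ≤ ∑ i, A i i * m i ^ 2 := by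
    refine hdom m fun i j => ?_
    nlinarith [min_le_right (u i) (0:ℝ), min_le_right (u j) (0:ℝ)]
  have hsum : ∑ i, A i i * p i ^ 2 + ∑ i, A i i * m i ^ 2 = ∑ i, A i i * u i ^ 2 := by
    rw [← Finset.sum_add_distrib]
    refine Finset.sum_congr rfl fun i _ => ?_
    have h0 : p i * m i = 0 := by
      rcases le_total (u i) 0 with h | h
      · simp [hp, hm, max_eq_right h]
      · simp [hp, hm, min_eq_right h]
    have h2 : p i ^ 2 + m i ^ 2 = u i ^ 2 := by rw [← hpm i]; linear_combination (-2 : ℝ) * h0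
    rw [← h2]; ring
  have h1 : Q u ≤ 2 * ∑ i, A i i * u i ^ 2 := by linarith
  refine ⟨h1, h1.trans ?_⟩
  have : ∑ i, A i i * u i ^ 2 ≤ ∑ i, u i ^ 2 := by
    refine Finset.sum_le_sum fun i _ => ?_
    nlinarith [hdiag i, hdiag0 i, sq_nonneg (u i)]
  linarith
end

section
/- If a probability measure ν on {-1,1}^n satisfies the Rayleigh property, then ν is 2-semi-log-concave, i.e., ∇²L[ν](x) ⪯ 2·Id for all x ∈ ℝ^n, and moreover ∇²L[ν](x) ⪯ 2·diag(∇²L[ν](x)) for all x. -/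
open Finset

/-- The embedding of a Boolean point into `{-1,1}^n ⊆ ℝ^n`. -/
noncomputable def vec {n : ℕ} (σ : Fin n → Bool) : Fin n → ℝ := fun i => if σ i then 1 else -1

/-- The log-Laplace transform of a (weighted) measure `ν` on the discrete cube. -/
noncomputable def LL {n : ℕ} (ν : (Fin n → Bool) → ℝ) (x : Fin n → ℝ) : ℝ :=
  Real.log (∑ σ : Fin n → Bool, ν σ * Real.exp (∑ i, x i * vec σ i))

/-- The exponential tilt `τ_w ν` of `ν`, as a weight function on the cube. -/
noncomputable def tilt {n : ℕ} (ν : (Fin n → Bool) → ℝ) (w : Fin n → ℝ) (σ : Fin n → Bool) : ℝ :=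
  ν σ * Real.exp (∑ i, w i * vec σ i) /
    ∑ τ : Fin n → Bool, ν τ * Real.exp (∑ i, w i * vec τ i)

/-- Barycenter (mean) of the tilted measure, `a_ν(w)`. -/
noncomputable def tmean {n : ℕ} (ν : (Fin n → Bool) → ℝ) (w : Fin n → ℝ) (i : Fin n) : ℝ :=
  ∑ σ : Fin n → Bool, tilt ν w σ * vec σ i

/-- Covariance matrix of the tilted measure, `A_ν(w) = Cov(τ_w ν)`. -/
noncomputable def tcov {n : ℕ} (ν : (Fin n → Bool) → ℝ) (w : Fin n → ℝ) (i j : Fin n) : ℝ :=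
  ∑ σ : Fin n → Bool, tilt ν w σ * (vec σ i - tmean ν w i) * (vec σ j - tmean ν w j)

/-- Partial derivative in the `i`-th coordinate direction. -/
noncomputable def pderiv' {n : ℕ} (f : (Fin n → ℝ) → ℝ) (i : Fin n) (x : Fin n → ℝ) : ℝ :=
  fderiv ℝ f x (Pi.single i 1)

/-- Hessian matrix entry `∂ᵢ∂ⱼ f (x)`. -/
noncomputable def hess {n : ℕ} (f : (Fin n → ℝ) → ℝ) (x : Fin n → ℝ) (i j : Fin n) : ℝ :=
  pderiv' (pderiv' f j) i x

namespace Stmt6Aux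
variable {n : ℕ}

noncomputable def lmap (σ : Fin n → Bool) : (Fin n → ℝ) →L[ℝ] ℝ :=
  ∑ i, vec σ i • (ContinuousLinearMap.proj i : ((Fin n) → ℝ) →L[ℝ] ℝ)

lemma lmap_apply (σ : Fin n → Bool) (x : Fin n → ℝ) :
    lmap σ x = ∑ i, x i * vec σ i := by
  simp [lmap, ContinuousLinearMap.sum_apply, mul_comm]

lemma lmap_single (σ : Fin n → Bool) (j : Fin n) :
    lmap σ (Pi.single j 1) = vec σ j := by
  rw [lmap_apply]
  simp [Pi.single_apply, ite_mul]

noncomputable def S (c : (Fin n → Bool) → ℝ) (y : Fin n → ℝ) : ℝ :=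
  ∑ σ : Fin n → Bool, c σ * Real.exp (lmap σ y)

lemma hasD (c : (Fin n → Bool) → ℝ) (x : Fin n → ℝ) : HasFDerivAt (S c)
    (∑ σ : Fin n → Bool, (c σ * Real.exp (lmap σ x)) • (lmap σ)) x := by
  refine HasFDerivAt.fun_sum fun σ _ => ?_
  simpa [smul_smul] using ((lmap σ).hasFDerivAt (x := x)).exp.const_mul (c σ)

lemma S_deriv_single (c : (Fin n → Bool) → ℝ) (x : Fin n → ℝ) (i : Fin n) :
    (∑ σ : Fin n → Bool, (c σ * Real.exp (lmap σ x)) • (lmap σ)) (Pi.single i 1)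
      = ∑ σ : Fin n → Bool, c σ * Real.exp (lmap σ x) * vec σ i := by
  simp [ContinuousLinearMap.sum_apply, lmap_single, smul_eq_mul]

variable {ν : (Fin n → Bool) → ℝ}

lemma S_pos (hν0 : ∀ σ, 0 ≤ ν σ) (hν1 : ∑ σ : Fin n → Bool, ν σ = 1) (x : Fin n → ℝ) :
    0 < S ν x := by
  obtain ⟨σ0, hσ0⟩ : ∃ σ, 0 < ν σ := by
    by_contra h
    push_neg at h
    have h0 : ∑ σ : Fin n → Bool, ν σ = 0 :=
      Finset.sum_eq_zero fun σ _ => le_antisymm (h σ) (hν0 σ)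
    rw [h0] at hν1; norm_num at hν1
  exact Finset.sum_pos' (fun σ _ => mul_nonneg (hν0 σ) (Real.exp_pos _).le)
    ⟨σ0, Finset.mem_univ _, mul_pos hσ0 (Real.exp_pos _)⟩

lemma pderiv_LL (hν0 : ∀ σ, 0 ≤ ν σ) (hν1 : ∑ σ : Fin n → Bool, ν σ = 1)
    (j : Fin n) (y : Fin n → ℝ) :
    pderiv' (LL ν) j y = (S ν y)⁻¹ * S (fun σ => ν σ * vec σ j) y := by
  have hZ := hasD (n := n) ν y
  have hlog := hZ.log (S_pos hν0 hν1 y).ne'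
  have hLL : LL ν = fun z => Real.log (S ν z) := by
    funext z; simp [LL, S, lmap_apply]
  rw [pderiv', hLL, hlog.fderiv]
  rw [ContinuousLinearMap.smul_apply, S_deriv_single, smul_eq_mul]
  congr 1
  exact Finset.sum_congr rfl fun σ _ => by simp [S]; ring

lemma hess_LL (hν0 : ∀ σ, 0 ≤ ν σ) (hν1 : ∑ σ : Fin n → Bool, ν σ = 1)
    (x : Fin n → ℝ) (i j : Fin n) :
    hess (LL ν) x i j =
      S (fun σ => ν σ * vec σ i * vec σ j) x / S ν x
        - (S (fun σ => ν σ * vec σ i) x / S ν x) * (S (fun σ => ν σ * vec σ j) x / S ν x) := by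
  have hZpos := S_pos hν0 hν1 x
  have hg : pderiv' (LL ν) j = fun y => (S ν y)⁻¹ * S (fun σ => ν σ * vec σ j) y :=
    funext fun y => pderiv_LL hν0 hν1 j y
  have hZ := hasD (n := n) ν x
  have hN := hasD (n := n) (fun σ => ν σ * vec σ j) x
  have hinv : HasFDerivAt (fun y => (S ν y)⁻¹)
      ((-((S ν x) ^ 2)⁻¹) • (∑ σ : Fin n → Bool, (ν σ * Real.exp (lmap σ x)) • (lmap σ))) x :=
    (hasDerivAt_inv hZpos.ne').comp_hasFDerivAt x hZ
  have hmul : HasFDerivAt (fun y => (S ν y)⁻¹ * S (fun σ => ν σ * vec σ j) y) _ x :=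
    hinv.mul hN
  rw [hess, pderiv', hg, hmul.fderiv]
  rw [ContinuousLinearMap.add_apply, ContinuousLinearMap.smul_apply,
    ContinuousLinearMap.smul_apply, ContinuousLinearMap.smul_apply,
    S_deriv_single, S_deriv_single, smul_eq_mul, smul_eq_mul, smul_eq_mul]
  have e1 : (∑ σ : Fin n → Bool, (fun σ => ν σ * vec σ j) σ * Real.exp (lmap σ x) * vec σ i)
      = S (fun σ => ν σ * vec σ i * vec σ j) x :=
    Finset.sum_congr rfl fun σ _ => by simp only [S]; ring
  have e2 : (∑ σ : Fin n → Bool, ν σ * Real.exp (lmap σ x) * vec σ i)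
      = S (fun σ => ν σ * vec σ i) x :=
    Finset.sum_congr rfl fun σ _ => by simp only [S]; ring
  rw [e1, e2]
  field_simp
  ring

lemma vec_sq (σ : Fin n → Bool) (i : Fin n) : vec σ i * vec σ i = 1 := by
  simp only [vec]; split <;> norm_num

lemma swap1 (p : (Fin n → Bool) → ℝ) (v : Fin n → ℝ) :
    ∑ i, v i * ∑ σ : Fin n → Bool, p σ * vec σ i
      = ∑ σ : Fin n → Bool, p σ * ∑ i, v i * vec σ i := by
  simp_rw [Finset.mul_sum]
  rw [Finset.sum_comm]
  exact Finset.sum_congr rfl fun σ _ => Finset.sum_congr rfl fun i _ => by ring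

lemma swap2 (p : (Fin n → Bool) → ℝ) (v : Fin n → ℝ) :
    ∑ i, ∑ j, v i * (∑ σ : Fin n → Bool, p σ * vec σ i * vec σ j) * v j
      = ∑ σ : Fin n → Bool, p σ * (∑ i, v i * vec σ i) ^ 2 := by
  have h : ∀ σ : Fin n → Bool, p σ * (∑ i, v i * vec σ i) ^ 2
      = ∑ i, ∑ j, v i * (p σ * vec σ i * vec σ j) * v j := by
    intro σ
    rw [sq, Finset.sum_mul_sum, Finset.mul_sum]
    refine Finset.sum_congr rfl fun i _ => ?_
    rw [Finset.mul_sum]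
    exact Finset.sum_congr rfl fun j _ => by ring
  calc ∑ i, ∑ j, v i * (∑ σ : Fin n → Bool, p σ * vec σ i * vec σ j) * v j
      = ∑ i, ∑ σ : Fin n → Bool, ∑ j, v i * (p σ * vec σ i * vec σ j) * v j := by
        refine Finset.sum_congr rfl fun i _ => ?_
        rw [← Finset.sum_comm]
        refine Finset.sum_congr rfl fun j _ => ?_
        rw [Finset.mul_sum, Finset.sum_mul]
    _ = ∑ σ : Fin n → Bool, ∑ i, ∑ j, v i * (p σ * vec σ i * vec σ j) * v j :=
        Finset.sum_comm
    _ = ∑ σ : Fin n → Bool, p σ * (∑ i, v i * vec σ i) ^ 2 :=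
        Finset.sum_congr rfl fun σ _ => (h σ).symm

lemma quad_bound (A : Fin n → Fin n → ℝ)
    (hoff : ∀ i j, i ≠ j → A i j ≤ 0)
    (hpsd : ∀ v : Fin n → ℝ, 0 ≤ ∑ i, ∑ j, v i * A i j * v j)
    (u : Fin n → ℝ) :
    (∑ i, ∑ j, u i * A i j * u j) ≤ 2 * ∑ i, A i i * u i ^ 2 := by
  have h := hpsd (fun i => |u i|)
  have step : (∑ i, ∑ j, u i * A i j * u j) + (∑ i, ∑ j, |u i| * A i j * |u j|)
      ≤ 2 * ∑ i, A i i * u i ^ 2 := by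
    have e : (∑ i, ∑ j, u i * A i j * u j) + (∑ i, ∑ j, |u i| * A i j * |u j|)
        = ∑ i, ∑ j, (u i * A i j * u j + |u i| * A i j * |u j|) := by
      rw [← Finset.sum_add_distrib]
      exact Finset.sum_congr rfl fun i _ => by rw [← Finset.sum_add_distrib]
    rw [e]
    have e2 : (2 : ℝ) * ∑ i, A i i * u i ^ 2
        = ∑ i, ∑ j, (if i = j then 2 * (A i i * u i ^ 2) else 0) := by
      rw [Finset.mul_sum]
      exact Finset.sum_congr rfl fun i _ => by simp
    rw [e2]
    refine Finset.sum_le_sum fun i _ => Finset.sum_le_sum fun j _ => ?_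
    by_cases hij : i = j
    · subst hij
      rw [if_pos rfl]
      have h1 : u i * A i i * u i = A i i * u i ^ 2 := by ring
      have h2 : |u i| * A i i * |u i| = A i i * u i ^ 2 := by
        rw [mul_comm (|u i|) (A i i), mul_assoc, abs_mul_abs_self]; ring
      linarith
    · simp only [if_neg hij]
      have hA := hoff i j hij
      have habs : |u i| * |u j| = |u i * u j| := (abs_mul _ _).symm
      nlinarith [neg_abs_le (u i * u j), abs_nonneg (u i * u j)]
  linarith [h]

lemma alg (T : Fin n → Fin n → ℝ) (b : Fin n → ℝ) (Z : ℝ) (v : Fin n → ℝ) :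
    ∑ i, ∑ j, v i * (T i j / Z - (b i / Z) * (b j / Z)) * v j
      = (∑ i, ∑ j, v i * T i j * v j) / Z - ((∑ i, v i * b i) / Z) ^ 2 := by
  have e1 : ∀ i j : Fin n, v i * (T i j / Z - (b i / Z) * (b j / Z)) * v j
      = v i * T i j * v j / Z - (v i * (b i / Z)) * (v j * (b j / Z)) := fun i j => by ring
  simp_rw [e1, Finset.sum_sub_distrib]
  have h2 : ∑ i, ∑ j, (v i * (b i / Z)) * (v j * (b j / Z))
      = (∑ i, v i * (b i / Z)) * (∑ j, v j * (b j / Z)) := (Finset.sum_mul_sum _ _ _ _).symm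
  have h3 : ∑ i, v i * (b i / Z) = (∑ i, v i * b i) / Z := by
    rw [Finset.sum_div]
    exact Finset.sum_congr rfl fun i _ => (mul_div_assoc _ _ _).symm
  have h4 : ∑ i, ∑ j, v i * T i j * v j / Z = (∑ i, ∑ j, v i * T i j * v j) / Z := by
    rw [Finset.sum_div]
    exact Finset.sum_congr rfl fun i _ => (Finset.sum_div _ _ _).symm
  rw [h2, h3, h4, sq]

end Stmt6Aux

open Stmt6Aux in
/-- If `ν` satisfies the Rayleigh property then `ν` is `2`-semi-log-concave:
`∇²L[ν](x) ⪯ 2·Id`, and moreover `∇²L[ν](x) ⪯ 2·diag(∇²L[ν](x))`, for all `x`. -/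
theorem stmt6 {n : ℕ} (ν : (Fin n → Bool) → ℝ)
    (hν0 : ∀ σ, 0 ≤ ν σ) (hν1 : ∑ σ : Fin n → Bool, ν σ = 1)
    (hRayleigh : ∀ θ : Fin n → ℝ, ∀ i j, i ≠ j →
        (∑ σ : Fin n → Bool, ν σ * (vec σ i * vec σ j * Real.exp (∑ k, θ k * vec σ k))) *
          (∑ σ : Fin n → Bool, ν σ * Real.exp (∑ k, θ k * vec σ k)) ≤
        (∑ σ : Fin n → Bool, ν σ * (vec σ i * Real.exp (∑ k, θ k * vec σ k))) *
          (∑ σ : Fin n → Bool, ν σ * (vec σ j * Real.exp (∑ k, θ k * vec σ k)))) :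
    ∀ (x : Fin n → ℝ) (u : Fin n → ℝ),
      (∑ i, ∑ j, u i * hess (LL ν) x i j * u j) ≤ 2 * ∑ i, (u i) ^ 2 ∧
      (∑ i, ∑ j, u i * hess (LL ν) x i j * u j) ≤ 2 * ∑ i, hess (LL ν) x i i * (u i) ^ 2 := by
  intro x u
  set p : (Fin n → Bool) → ℝ := fun σ => ν σ * Real.exp (lmap σ x) with hp_def
  have hp : ∀ σ, 0 ≤ p σ := fun σ => mul_nonneg (hν0 σ) (Real.exp_pos _).le
  have hZpos : 0 < S ν x := S_pos hν0 hν1 x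
  set Z : ℝ := S ν x with hZ_def
  have hZsum : Z = ∑ σ : Fin n → Bool, p σ := rfl
  -- hess in p-form
  have eT : ∀ i j, S (fun σ => ν σ * vec σ i * vec σ j) x
      = ∑ σ : Fin n → Bool, p σ * vec σ i * vec σ j := fun i j =>
    Finset.sum_congr rfl fun σ _ => by simp only [hp_def]; ring
  have eB : ∀ i, S (fun σ => ν σ * vec σ i) x
      = ∑ σ : Fin n → Bool, p σ * vec σ i := fun i =>
    Finset.sum_congr rfl fun σ _ => by simp only [hp_def]; ring
  have ehess : ∀ i j, hess (LL ν) x i j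
      = (∑ σ : Fin n → Bool, p σ * vec σ i * vec σ j) / Z
        - ((∑ σ : Fin n → Bool, p σ * vec σ i) / Z)
          * ((∑ σ : Fin n → Bool, p σ * vec σ j) / Z) := by
    intro i j
    rw [hess_LL hν0 hν1 x i j, eT, eB, eB]
  -- off-diagonal nonpositivity from the Rayleigh property
  have hoff : ∀ i j, i ≠ j → hess (LL ν) x i j ≤ 0 := by
    intro i j hij
    have hR := hRayleigh x i j hij
    have r1 : (∑ σ : Fin n → Bool, ν σ * (vec σ i * vec σ j * Real.exp (∑ k, x k * vec σ k)))
        = ∑ σ : Fin n → Bool, p σ * vec σ i * vec σ j :=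
      Finset.sum_congr rfl fun σ _ => by simp only [hp_def, ← lmap_apply]; ring
    have r2 : (∑ σ : Fin n → Bool, ν σ * Real.exp (∑ k, x k * vec σ k))
        = ∑ σ : Fin n → Bool, p σ :=
      Finset.sum_congr rfl fun σ _ => by simp only [hp_def, ← lmap_apply]
    have r3 : ∀ i, (∑ σ : Fin n → Bool, ν σ * (vec σ i * Real.exp (∑ k, x k * vec σ k)))
        = ∑ σ : Fin n → Bool, p σ * vec σ i := fun i =>
      Finset.sum_congr rfl fun σ _ => by simp only [hp_def, ← lmap_apply]; ring
    rw [r1, r2, r3, r3] at hR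
    rw [ehess i j]
    have hnum : (∑ σ : Fin n → Bool, p σ * vec σ i * vec σ j) * Z
        - (∑ σ : Fin n → Bool, p σ * vec σ i) * (∑ σ : Fin n → Bool, p σ * vec σ j) ≤ 0 := by
      rw [hZsum]; linarith
    have heq : (∑ σ : Fin n → Bool, p σ * vec σ i * vec σ j) / Z
        - ((∑ σ : Fin n → Bool, p σ * vec σ i) / Z)
          * ((∑ σ : Fin n → Bool, p σ * vec σ j) / Z)
        = ((∑ σ : Fin n → Bool, p σ * vec σ i * vec σ j) * Z
            - (∑ σ : Fin n → Bool, p σ * vec σ i) * (∑ σ : Fin n → Bool, p σ * vec σ j)) / Z ^ 2 := by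
      field_simp
    rw [heq]
    exact div_nonpos_of_nonpos_of_nonneg hnum (sq_nonneg Z)
  -- positive semidefiniteness
  have hpsd : ∀ v : Fin n → ℝ, 0 ≤ ∑ i, ∑ j, v i * hess (LL ν) x i j * v j := by
    intro v
    have eQ : ∑ i, ∑ j, v i * hess (LL ν) x i j * v j
        = (∑ σ : Fin n → Bool, p σ * (∑ i, v i * vec σ i) ^ 2) / Z
          - ((∑ σ : Fin n → Bool, p σ * (∑ i, v i * vec σ i)) / Z) ^ 2 := by
      simp_rw [ehess]
      rw [alg (fun i j => ∑ σ : Fin n → Bool, p σ * vec σ i * vec σ j)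
        (fun i => ∑ σ : Fin n → Bool, p σ * vec σ i) Z v, swap2, swap1]
    rw [eQ]
    have cs : (∑ σ : Fin n → Bool, p σ * (∑ i, v i * vec σ i)) ^ 2
        ≤ (∑ σ : Fin n → Bool, p σ)
          * ∑ σ : Fin n → Bool, p σ * (∑ i, v i * vec σ i) ^ 2 := by
      have h := Finset.sum_mul_sq_le_sq_mul_sq Finset.univ
        (fun σ : Fin n → Bool => Real.sqrt (p σ))
        (fun σ : Fin n → Bool => Real.sqrt (p σ) * (∑ i, v i * vec σ i))
      have e5 : ∀ σ : Fin n → Bool,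
          Real.sqrt (p σ) * (Real.sqrt (p σ) * (∑ i, v i * vec σ i))
            = p σ * (∑ i, v i * vec σ i) := fun σ => by
        rw [← mul_assoc, Real.mul_self_sqrt (hp σ)]
      have e6 : ∀ σ : Fin n → Bool, Real.sqrt (p σ) ^ 2 = p σ := fun σ => Real.sq_sqrt (hp σ)
      have e7 : ∀ σ : Fin n → Bool,
          (Real.sqrt (p σ) * (∑ i, v i * vec σ i)) ^ 2
            = p σ * (∑ i, v i * vec σ i) ^ 2 := fun σ => by
        rw [mul_pow, Real.sq_sqrt (hp σ)]
      simp_rw [e5, e6, e7] at h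
      exact h
    rw [← hZsum] at cs
    have hZ2 : (0 : ℝ) < Z ^ 2 := by positivity
    rw [sub_nonneg, div_pow, div_le_div_iff₀ hZ2 hZpos]
    calc (∑ σ : Fin n → Bool, p σ * (∑ i, v i * vec σ i)) ^ 2 * Z
        ≤ (Z * ∑ σ : Fin n → Bool, p σ * (∑ i, v i * vec σ i) ^ 2) * Z := by
          exact mul_le_mul_of_nonneg_right cs hZpos.le
      _ = (∑ σ : Fin n → Bool, p σ * (∑ i, v i * vec σ i) ^ 2) * Z ^ 2 := by ring
  -- diagonal entries
  have hdiag : ∀ i, hess (LL ν) x i i ≤ 1 := by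
    intro i
    have eTi : (∑ σ : Fin n → Bool, p σ * vec σ i * vec σ i) = Z := by
      rw [hZsum]
      exact Finset.sum_congr rfl fun σ _ => by rw [mul_assoc, vec_sq, mul_one]
    rw [ehess i i, eTi, div_self hZpos.ne']
    nlinarith [sq_nonneg ((∑ σ : Fin n → Bool, p σ * vec σ i) / Z)]
  have main2 : (∑ i, ∑ j, u i * hess (LL ν) x i j * u j)
      ≤ 2 * ∑ i, hess (LL ν) x i i * (u i) ^ 2 :=
    quad_bound (hess (LL ν) x) hoff hpsd u
  refine ⟨?_, main2⟩
  refine main2.trans ?_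
  have : ∑ i, hess (LL ν) x i i * u i ^ 2 ≤ ∑ i, u i ^ 2 :=
    Finset.sum_le_sum fun i _ => by nlinarith [hdiag i, sq_nonneg (u i)]
  linarith
end

section
/- If φ : {-1,1}^n → ℝ is 1-Hamming-Lipschitz, then its multilinear (harmonic) extension φ : [-1,1]^n → ℝ satisfies |∂ᵢφ(x)| ≤ 1 for all x ∈ [-1,1]^n and all i ∈ [n]; consequently the extension is √n-Lipschitz with respect to the Euclidean distance on [-1,1]^n. -/
set_option maxHeartbeats 1000000


open Finset

/-- The multilinear (harmonic) extension of `φ : {-1,1}^n → ℝ` to `[-1,1]^n`. -/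
noncomputable def mext {n : ℕ} (φ : (Fin n → Bool) → ℝ) (x : Fin n → ℝ) : ℝ :=
  ∑ σ : Fin n → Bool, φ σ * ∏ i, (1 + x i * vec σ i) / 2

lemma sum_prod_bool {n : ℕ} (g : Fin n → Bool → ℝ) :
    ∑ σ : Fin n → Bool, ∏ j, g j (σ j) = ∏ j, ∑ b : Bool, g j b :=
  (Fintype.prod_sum (fun j b => g j b)).symm

noncomputable def Dd {n : ℕ} (φ : (Fin n → Bool) → ℝ) (i : Fin n) (u : Fin n → ℝ) : ℝ :=
  ∑ σ : Fin n → Bool, φ σ * (vec σ i / 2) * ∏ j ∈ univ.erase i, (1 + u j * vec σ j) / 2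

lemma slopeD {n : ℕ} (φ : (Fin n → Bool) → ℝ) (i : Fin n) (u : Fin n → ℝ) (s t : ℝ) :
    mext φ (Function.update u i s) - mext φ (Function.update u i t) = (s - t) * Dd φ i u := by
  unfold mext Dd
  rw [← Finset.sum_sub_distrib, Finset.mul_sum]
  refine Finset.sum_congr rfl fun σ _ => ?_
  have key : ∀ r : ℝ, (∏ j, (1 + Function.update u i r j * vec σ j) / 2)
      = ((1 + r * vec σ i)/2) * ∏ j ∈ univ.erase i, (1 + u j * vec σ j) / 2 := by
    intro r
    rw [← Finset.mul_prod_erase univ _ (Finset.mem_univ i)]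
    congr 1
    · simp
    · exact Finset.prod_congr rfl fun j hj => by
        rw [Function.update_of_ne (Finset.mem_erase.1 hj).1]
  rw [key s, key t]; ring

lemma boundD {n : ℕ} (φ : (Fin n → Bool) → ℝ)
    (hφ : ∀ x y, |φ x - φ y| ≤ ∑ i, |vec x i - vec y i|)
    (i : Fin n) (u : Fin n → ℝ) (hu : ∀ j, |u j| ≤ 1) : |Dd φ i u| ≤ 1 := by
  classical
  set w : (Fin n → Bool) → ℝ := fun σ => ∏ j ∈ univ.erase i, (1 + u j * vec σ j) / 2 with hw
  have hwnn : ∀ σ, 0 ≤ w σ := by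
    intro σ
    refine Finset.prod_nonneg fun j _ => ?_
    have := abs_le.1 (hu j)
    unfold vec
    by_cases h : σ j <;> simp [h] <;> nlinarith [this.1, this.2]
  set flip : (Fin n → Bool) → (Fin n → Bool) := fun σ => Function.update σ i (!(σ i)) with hfl
  have hinv : Function.Involutive flip := by
    intro σ; funext j
    by_cases h : j = i <;> simp [hfl, h, Function.update_of_ne]
  have hwflip : ∀ σ, w (flip σ) = w σ := by
    intro σ
    refine Finset.prod_congr rfl fun j hj => ?_
    have : flip σ j = σ j := Function.update_of_ne (Finset.mem_erase.1 hj).1 _ _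
    simp [vec, this]
  have hvflip : ∀ σ, vec (flip σ) i = -vec σ i := by
    intro σ; unfold vec; simp [hfl]; cases σ i <;> simp
  -- reindexing identity
  have hre : ∑ σ : Fin n → Bool, φ (flip σ) * vec σ i * w σ
      = -∑ σ : Fin n → Bool, φ σ * vec σ i * w σ := by
    rw [← Finset.sum_neg_distrib]
    refine Fintype.sum_bijective flip hinv.bijective _ _ fun σ => ?_
    rw [hvflip, hwflip]; ring
  have hDd2 : Dd φ i u = (∑ σ : Fin n → Bool, φ σ * vec σ i * w σ) / 2 := by
    unfold Dd
    rw [Finset.sum_div]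
    exact Finset.sum_congr rfl fun σ _ => by simp only [hw]; ring
  have hDd : Dd φ i u = (∑ σ : Fin n → Bool, (φ σ - φ (flip σ)) * vec σ i * w σ) / 4 := by
    have hsplit : ∑ σ : Fin n → Bool, (φ σ - φ (flip σ)) * vec σ i * w σ
        = ∑ σ : Fin n → Bool, φ σ * vec σ i * w σ
          - ∑ σ : Fin n → Bool, φ (flip σ) * vec σ i * w σ := by
      rw [← Finset.sum_sub_distrib]
      exact Finset.sum_congr rfl fun σ _ => by ring
    rw [hDd2, hsplit, hre]; ring
  have hvabs : ∀ σ : Fin n → Bool, |vec σ i| = 1 := by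
    intro σ; unfold vec; cases σ i <;> simp
  have hlip : ∀ σ : Fin n → Bool, |φ σ - φ (flip σ)| ≤ 2 := by
    intro σ
    refine (hφ σ (flip σ)).trans_eq ?_
    rw [Fintype.sum_eq_single i ?_]
    · rw [hvflip]
      rw [show vec σ i - -vec σ i = 2 * vec σ i from by ring, abs_mul, hvabs]
      simp
    · intro j hj
      have : flip σ j = σ j := Function.update_of_ne hj _ _
      simp [vec, this]
  have hwsum : ∑ σ : Fin n → Bool, w σ = 2 := by
    have hrepr : ∀ σ : Fin n → Bool, w σ
        = ∏ j, (if j = i then (1:ℝ) else (1 + u j * (if σ j then 1 else -1)) / 2) := by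
      intro σ
      rw [← Finset.mul_prod_erase univ _ (Finset.mem_univ i)]
      rw [if_pos rfl, one_mul]
      exact (Finset.prod_congr rfl fun j hj => by
        rw [if_neg (Finset.mem_erase.1 hj).1]; rfl).symm
    calc ∑ σ : Fin n → Bool, w σ
        = ∑ σ : Fin n → Bool, ∏ j,
            (if j = i then (1:ℝ) else (1 + u j * (if σ j then 1 else -1)) / 2) :=
          Finset.sum_congr rfl fun σ _ => hrepr σ
      _ = ∏ j, ∑ b : Bool, (if j = i then (1:ℝ) else (1 + u j * (if b then 1 else -1)) / 2) :=
          sum_prod_bool (fun j b => if j = i then (1:ℝ) else (1 + u j * (if b then 1 else -1)) / 2)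
      _ = ∏ j, (if j = i then (2:ℝ) else 1) := by
          refine Finset.prod_congr rfl fun j _ => ?_
          by_cases h : j = i <;> simp [h] <;> ring
      _ = 2 := by simp
  calc |Dd φ i u| ≤ (∑ σ : Fin n → Bool, 2 * w σ) / 4 := by
        rw [hDd, abs_div, abs_of_nonneg (by norm_num : (0:ℝ) ≤ 4)]
        have h1 : |∑ σ : Fin n → Bool, (φ σ - φ (flip σ)) * vec σ i * w σ|
            ≤ ∑ σ : Fin n → Bool, 2 * w σ := by
          refine (Finset.abs_sum_le_sum_abs _ _).trans (Finset.sum_le_sum fun σ _ => ?_)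
          rw [abs_mul, abs_mul, hvabs, mul_one, abs_of_nonneg (hwnn σ)]
          exact mul_le_mul_of_nonneg_right (hlip σ) (hwnn σ)
        linarith
    _ = 1 := by rw [← Finset.mul_sum, hwsum]; norm_num

lemma mext_hasFDerivAt {n : ℕ} (φ : (Fin n → Bool) → ℝ) (x : Fin n → ℝ) :
    HasFDerivAt (mext φ)
      (∑ σ : Fin n → Bool, φ σ • ∑ j, (∏ k ∈ univ.erase j, (1 + x k * vec σ k) / 2) •
        ((vec σ j / 2) • (ContinuousLinearMap.proj j : (Fin n → ℝ) →L[ℝ] ℝ))) x := by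
  have h : ∀ σ : Fin n → Bool,
      HasFDerivAt (fun y : Fin n → ℝ => φ σ * ∏ i, (1 + y i * vec σ i) / 2)
      (φ σ • ∑ j, (∏ k ∈ univ.erase j, (1 + x k * vec σ k) / 2) •
        ((vec σ j / 2) • (ContinuousLinearMap.proj j : (Fin n → ℝ) →L[ℝ] ℝ))) x := by
    intro σ
    refine HasFDerivAt.const_mul ?_ (φ σ)
    refine HasFDerivAt.finset_prod (u := univ)
      (g := fun j (y : Fin n → ℝ) => (1 + y j * vec σ j) / 2)
      (g' := fun j => (vec σ j / 2) • (ContinuousLinearMap.proj j : (Fin n → ℝ) →L[ℝ] ℝ))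
      fun j _ => ?_
    show HasFDerivAt (fun y : Fin n → ℝ => (1 + y j * vec σ j) / 2)
      ((vec σ j / 2) • (ContinuousLinearMap.proj j : (Fin n → ℝ) →L[ℝ] ℝ)) x
    have key : (fun y : Fin n → ℝ => (1 + y j * vec σ j) / 2)
        = fun y : Fin n → ℝ => 1 / 2 + y j * (vec σ j / 2) := by funext y; ring
    rw [key]
    exact ((hasFDerivAt_apply j x).mul_const (vec σ j / 2)).const_add (1 / 2)
  exact HasFDerivAt.fun_sum fun σ _ => h σ

lemma pderiv_mext {n : ℕ} (φ : (Fin n → Bool) → ℝ) (i : Fin n) (x : Fin n → ℝ) :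
    pderiv' (mext φ) i x = Dd φ i x := by
  rw [pderiv', (mext_hasFDerivAt φ x).fderiv]
  unfold Dd
  rw [ContinuousLinearMap.sum_apply]
  refine Finset.sum_congr rfl fun σ _ => ?_
  rw [ContinuousLinearMap.smul_apply, ContinuousLinearMap.sum_apply]
  rw [Finset.sum_eq_single i ?_ (by simp)]
  · simp; ring
  · intro j _ hj
    simp [Pi.single_apply, Ne.symm hj]

/-- If `φ` is `1`-Hamming-Lipschitz then its multilinear extension satisfies
`|∂ᵢφ(x)| ≤ 1` on `[-1,1]^n`; consequently it is `√n`-Lipschitz in Euclidean distance. -/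
theorem stmt7 {n : ℕ} (φ : (Fin n → Bool) → ℝ)
    (hφ : ∀ x y, |φ x - φ y| ≤ ∑ i, |vec x i - vec y i|) :
    (∀ x : Fin n → ℝ, (∀ i, |x i| ≤ 1) → ∀ i, |pderiv' (mext φ) i x| ≤ 1) ∧
    (∀ x y : Fin n → ℝ, (∀ i, |x i| ≤ 1) → (∀ i, |y i| ≤ 1) →
      |mext φ x - mext φ y| ≤ Real.sqrt n * Real.sqrt (∑ i, (x i - y i) ^ 2)) := by
  constructor
  · intro x hx i
    rw [pderiv_mext]
    exact boundD φ hφ i x hx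
  · intro x y hx hy
    set z : ℕ → Fin n → ℝ := fun k j => if (j : ℕ) < k then x j else y j with hzdef
    have hz0 : z 0 = y := funext fun j => by simp [hzdef]
    have hzn : z n = x := funext fun j => by simp [hzdef, j.isLt]
    have hzcube : ∀ k j, |z k j| ≤ 1 := by
      intro k j
      by_cases h : (j : ℕ) < k
      · simpa [hzdef, h] using hx j
      · simpa [hzdef, h] using hy j
    set f : ℕ → ℝ := fun k => if h : k < n then |x ⟨k, h⟩ - y ⟨k, h⟩| else 0 with hfdef
    have key : |mext φ x - mext φ y| ≤ ∑ i, |x i - y i| := by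
      have htel : mext φ x - mext φ y
          = ∑ k ∈ Finset.range n, (mext φ (z (k + 1)) - mext φ (z k)) := by
        rw [Finset.sum_range_sub (fun k => mext φ (z k)), hz0, hzn]
      have hsum : ∑ i, |x i - y i| = ∑ k ∈ Finset.range n, f k := by
        rw [← Fin.sum_univ_eq_sum_range f n]
        exact Finset.sum_congr rfl fun i _ => by simp [hfdef, i.isLt]
      rw [htel, hsum]
      refine (Finset.abs_sum_le_sum_abs _ _).trans (Finset.sum_le_sum fun k hk => ?_)
      have hkn : k < n := Finset.mem_range.1 hk
      set i : Fin n := ⟨k, hkn⟩ with hidef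
      have h1 : z (k + 1) = Function.update (z k) i (x i) := by
        funext j
        rw [Function.update_apply]
        by_cases h : j = i
        · subst h; simp [hzdef, hidef]
        · have hji : (j : ℕ) ≠ k := fun hc => h (Fin.ext hc)
          rw [if_neg h]
          simp only [hzdef]
          congr 1
          simp only [eq_iff_iff]
          omega
      have h2 : z k = Function.update (z k) i (y i) := by
        funext j
        rw [Function.update_apply]
        by_cases h : j = i
        · subst h; simp [hzdef, hidef]
        · rw [if_neg h]
      have hstep : mext φ (z (k + 1)) - mext φ (z k) = (x i - y i) * Dd φ i (z k) := by
        nth_rewrite 1 [h1]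
        nth_rewrite 2 [h2]
        exact slopeD φ i (z k) (x i) (y i)
      rw [hstep, abs_mul]
      have hfk : f k = |x i - y i| := by simp [hfdef, hkn, hidef]
      rw [hfk]
      calc |x i - y i| * |Dd φ i (z k)| ≤ |x i - y i| * 1 :=
            mul_le_mul_of_nonneg_left (boundD φ hφ i (z k) (hzcube k)) (abs_nonneg _)
        _ = |x i - y i| := mul_one _
    have cs : ∑ i, |x i - y i| ≤ Real.sqrt n * Real.sqrt (∑ i, (x i - y i) ^ 2) := by
      have h2 : (∑ i, |x i - y i|) ^ 2 ≤ (n : ℝ) * ∑ i, (x i - y i) ^ 2 := by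
        have := Finset.sum_mul_sq_le_sq_mul_sq univ (fun _ => (1 : ℝ)) (fun i => |x i - y i|)
        simpa [sq_abs] using this
      calc ∑ i, |x i - y i| = Real.sqrt ((∑ i, |x i - y i|) ^ 2) :=
            (Real.sqrt_sq (Finset.sum_nonneg fun i _ => abs_nonneg _)).symm
        _ ≤ Real.sqrt ((n : ℝ) * ∑ i, (x i - y i) ^ 2) := Real.sqrt_le_sqrt h2
        _ = Real.sqrt n * Real.sqrt (∑ i, (x i - y i) ^ 2) := Real.sqrt_mul (Nat.cast_nonneg n) _
    exact key.trans cs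
end

section
/- Pairwise negative correlation does not imply concentration: there exist {0,1}-valued random variables X₁,…,Xₙ (rows of a Hadamard matrix construction) that are pairwise independent (hence pairwise non-positively correlated) and a 1-Hamming-Lipschitz function φ on {0,1}^n with Var[φ(X₁,…,Xₙ)] ≥ c n² for a universal constant c > 0 and infinitely many n. -/
open Finset

namespace Stmt16

variable {k : ℕ}

def ip (a v : Fin k → Bool) : ZMod 2 := ∑ t, if a t && v t then 1 else 0

def χ (a v : Fin k → Bool) : ℝ := ∏ t, if a t && v t then -1 else 1

lemma zmod2_cases : ∀ x : ZMod 2, x = 0 ∨ x = 1 := by decide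

lemma cast2 (m : ℕ) : ((m : ZMod 2) = 1) ↔ Odd m := by
  rw [Nat.odd_iff, ← ZMod.natCast_mod m 2]
  rcases Nat.mod_two_eq_zero_or_one m with h | h <;> rw [h] <;> simp

lemma ip_zero (v : Fin k → Bool) : ip (fun _ => false) v = 0 := by simp [ip]

lemma ip_comm (a v : Fin k → Bool) : ip a v = ip v a := by
  simp [ip, Bool.and_comm]

lemma ip_xor (a v w : Fin k → Bool) :
    ip a (fun t => xor (v t) (w t)) = ip a v + ip a w := by
  unfold ip
  rw [← Finset.sum_add_distrib]
  refine Finset.sum_congr rfl fun t _ => ?_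
  cases ha : a t <;> cases hv : v t <;> cases hw : w t <;> simp [ha, hv, hw] <;> decide

lemma ip_card (a v : Fin k → Bool) :
    ip a v = ((univ.filter fun t => a t && v t).card : ZMod 2) := by
  unfold ip; rw [Finset.sum_boole]

lemma chi_card (a v : Fin k → Bool) :
    χ a v = (-1 : ℝ) ^ (univ.filter fun t => a t && v t).card := by
  unfold χ
  rw [Finset.prod_ite, Finset.prod_const, Finset.prod_const, one_pow, mul_one]

lemma chi_eq (a v : Fin k → Bool) : χ a v = if ip a v = 1 then -1 else 1 := by
  rw [chi_card, ip_card]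
  generalize (univ.filter fun t => a t && v t).card = m
  rcases Nat.even_or_odd m with h | h
  · rw [h.neg_one_pow, if_neg fun c => (Nat.not_even_iff_odd.mpr ((cast2 m).mp c)) h]
  · rw [h.neg_one_pow, if_pos ((cast2 m).mpr h)]

lemma chi_mul (a b v : Fin k → Bool) :
    χ a v * χ b v = χ (fun t => xor (a t) (b t)) v := by
  unfold χ
  rw [← Finset.prod_mul_distrib]
  refine Finset.prod_congr rfl fun t _ => ?_
  cases ha : a t <;> cases hb : b t <;> cases hv : v t <;> simp [ha, hb, hv]

lemma chi_sum {a : Fin k → Bool} (ha : a ≠ fun _ => false) :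
    ∑ v : Fin k → Bool, χ a v = 0 := by
  obtain ⟨t0, ht0⟩ : ∃ t0, a t0 = true := by
    by_contra h
    push_neg at h
    exact ha (funext fun t => by simpa using h t)
  have key : ∀ v : Fin k → Bool, χ a (Function.update v t0 (!v t0)) = -χ a v := by
    intro v
    unfold χ
    rw [← Finset.prod_erase_mul _ _ (mem_univ t0), ← Finset.prod_erase_mul _ _ (mem_univ t0)]
    have h1 : (∏ x ∈ univ.erase t0, if (a x && Function.update v t0 (!v t0) x) = true then (-1:ℝ) else 1)
        = ∏ x ∈ univ.erase t0, if (a x && v x) = true then (-1:ℝ) else 1 := by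
      refine Finset.prod_congr rfl fun t ht => ?_
      rw [Function.update_of_ne (Finset.ne_of_mem_erase ht)]
    have h2 : (if (a t0 && Function.update v t0 (!v t0) t0) = true then (-1:ℝ) else 1)
        = -(if (a t0 && v t0) = true then (-1:ℝ) else 1) := by
      rw [Function.update_self, ht0]
      cases hv : v t0 <;> simp [hv]
    rw [h1, h2]; ring
  refine Finset.sum_involution (fun v _ => Function.update v t0 (!v t0))
    (fun v _ => by rw [key v]; ring) (fun v _ hne => ?_) (fun v _ => mem_univ _)
    (fun v _ => ?_)
  · intro hEq
    have hEq' : Function.update v t0 (!v t0) = v := hEq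
    have := congrFun hEq' t0
    rw [Function.update_self] at this
    cases hv : v t0 <;> rw [hv] at this <;> simp at this
  · funext t
    by_cases h : t = t0
    · subst h; simp
    · simp [Function.update_of_ne h]

end Stmt16

namespace Stmt16

def sgn (s : ZMod 2) : ℝ := if s = 1 then -1 else 1

variable {k : ℕ}

lemma card_univ_fun : (Finset.univ : Finset (Fin k → Bool)).card = 2 ^ k := by
  simp [Finset.card_univ]

lemma ind_eq (a v : Fin k → Bool) (s : ZMod 2) :
    (if ip a v = s then (1:ℝ) else 0) = (1 + sgn s * χ a v) / 2 := by
  rw [chi_eq]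
  rcases zmod2_cases (ip a v) with h | h <;> rcases zmod2_cases s with hs | hs <;>
    simp [h, hs, sgn] <;> norm_num

lemma cnt_marginal {a : Fin k → Bool} (ha : a ≠ fun _ => false) (s : ZMod 2) :
    ∑ v : Fin k → Bool, (if ip a v = s then (1:ℝ) else 0) = 2 ^ k / 2 := by
  simp_rw [ind_eq]
  rw [← Finset.sum_div, Finset.sum_add_distrib, ← Finset.mul_sum, chi_sum ha,
    Finset.sum_const, card_univ_fun]
  simp

lemma xor_ne_zero {a b : Fin k → Bool} (hab : a ≠ b) :
    (fun t => xor (a t) (b t)) ≠ fun _ => false := by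
  intro h
  apply hab
  funext t
  have := congrFun h t
  cases hat : a t <;> cases hbt : b t <;> simp_all

lemma cnt_joint {a b : Fin k → Bool} (ha : a ≠ fun _ => false) (hb : b ≠ fun _ => false)
    (hab : a ≠ b) (s t : ZMod 2) :
    ∑ v : Fin k → Bool, (if ip a v = s ∧ ip b v = t then (1:ℝ) else 0) = 2 ^ k / 4 := by
  have key : ∀ v : Fin k → Bool, (if ip a v = s ∧ ip b v = t then (1:ℝ) else 0)
      = (1 + sgn s * χ a v + sgn t * χ b v + sgn s * sgn t * (χ a v * χ b v)) / 4 := by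
    intro v
    have h1 := ind_eq a v s
    have h2 := ind_eq b v t
    have : (if ip a v = s ∧ ip b v = t then (1:ℝ) else 0)
        = (if ip a v = s then (1:ℝ) else 0) * (if ip b v = t then (1:ℝ) else 0) := by
      by_cases hA : ip a v = s <;> by_cases hB : ip b v = t <;> simp [hA, hB]
    rw [this, h1, h2]; ring
  simp_rw [key, chi_mul]
  rw [← Finset.sum_div, Finset.sum_add_distrib, Finset.sum_add_distrib, Finset.sum_add_distrib,
    ← Finset.mul_sum, ← Finset.mul_sum, ← Finset.mul_sum, chi_sum ha, chi_sum hb,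
    chi_sum (xor_ne_zero hab), Finset.sum_const, card_univ_fun]
  simp

end Stmt16

namespace Stmt16

variable {k n : ℕ} (β : Fin n ≃ (Fin k → Bool))

def row (v : Fin k → Bool) : Fin n → Bool := fun i => decide (ip (β i) v = 1)

noncomputable def nu (σ : Fin n → Bool) : ℝ := ((univ.filter fun v => row β v = σ).card : ℝ) / 2 ^ k

def bz (a : Bool) : ZMod 2 := if a then 1 else 0

lemma nu_nonneg (σ : Fin n → Bool) : 0 ≤ nu β σ := by
  unfold nu; positivity

lemma transfer (f : (Fin n → Bool) → ℝ) :
    ∑ σ : Fin n → Bool, nu β σ * f σ = (∑ v : Fin k → Bool, f (row β v)) / 2 ^ k := by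
  have h : ∀ σ : Fin n → Bool, nu β σ * f σ
      = (∑ v ∈ univ.filter fun v => row β v = σ, f (row β v)) / 2 ^ k := by
    intro σ
    have : ∑ v ∈ univ.filter fun v => row β v = σ, f (row β v)
        = ((univ.filter fun v => row β v = σ).card : ℝ) * f σ := by
      rw [Finset.sum_congr rfl fun v hv => by rw [(Finset.mem_filter.mp hv).2]]
      rw [Finset.sum_const, nsmul_eq_mul]
    rw [this, nu, div_mul_eq_mul_div]
  simp_rw [h]
  rw [← Finset.sum_div, Finset.sum_fiberwise]

lemma nu_sum : ∑ σ : Fin n → Bool, nu β σ = 1 := by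
  have := transfer β (fun _ => 1)
  simp only [mul_one] at this
  rw [this, Finset.sum_const, card_univ_fun]
  simp

lemma row_eq_iff (v : Fin k → Bool) (i : Fin n) (a : Bool) :
    row β v i = a ↔ ip (β i) v = bz a := by
  cases a
  · rcases zmod2_cases (ip (β i) v) with h | h <;>
      simp [row, bz, h] <;> decide
  · simp [row, bz]

end Stmt16

namespace Stmt16

variable {k n : ℕ} (β : Fin n ≃ (Fin k → Bool))

lemma if_nu (P : (Fin n → Bool) → Prop) [DecidablePred P] :
    (∑ σ : Fin n → Bool, if P σ then nu β σ else 0)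
      = (∑ v : Fin k → Bool, if P (row β v) then (1:ℝ) else 0) / 2 ^ k := by
  have h : ∀ σ : Fin n → Bool, (if P σ then nu β σ else 0)
      = nu β σ * (if P σ then (1:ℝ) else 0) := by
    intro σ; by_cases hP : P σ <;> simp [hP]
  simp_rw [h]
  rw [transfer]

lemma indep (i j : Fin n) (hij : i ≠ j) (a b : Bool) :
    (∑ σ : Fin n → Bool, if σ i = a ∧ σ j = b then nu β σ else 0) =
      (∑ σ : Fin n → Bool, if σ i = a then nu β σ else 0) *
        (∑ σ : Fin n → Bool, if σ j = b then nu β σ else 0) := by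
  have h2k : (2:ℝ) ^ k ≠ 0 := by positivity
  rw [if_nu, if_nu, if_nu]
  simp_rw [row_eq_iff]
  have hβ : β i ≠ β j := fun h => hij (β.injective h)
  by_cases hi : β i = fun _ => false
  · -- X_i is constant 0
    simp_rw [hi, ip_zero]
    rcases zmod2_cases (bz a) with ha | ha <;> rw [ha]
    · simp only [true_and, if_pos rfl]
      rw [Finset.sum_const, card_univ_fun]
      field_simp
      simp
    · have h1 : (1 : ZMod 2) ≠ 0 := by decide
      have e0 : (0 : ZMod 2) = 1 ↔ False := by simp [h1.symm]
      simp only [e0, false_and, if_neg (not_false), if_false]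
      simp
  · by_cases hj : β j = fun _ => false
    · simp_rw [hj, ip_zero]
      rcases zmod2_cases (bz b) with hb | hb <;> rw [hb]
      · simp only [and_true, if_pos rfl]
        rw [Finset.sum_const, card_univ_fun]
        field_simp
        simp
      · have h1 : (1 : ZMod 2) ≠ 0 := by decide
        have e0 : (0 : ZMod 2) = 1 ↔ False := by simp [h1.symm]
        simp only [e0, and_false, if_neg (not_false), if_false]
        simp
    · rw [cnt_joint hi hj hβ, cnt_marginal hi, cnt_marginal hj]
      field_simp
      ring

end Stmt16

namespace Stmt16

variable {k n : ℕ} (β : Fin n ≃ (Fin k → Bool)) (t0 : Fin k)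

def AV (t0 : Fin k) : Finset (Fin k → Bool) := univ.filter fun w => w t0 = false

lemma AV_nonempty : (AV t0).Nonempty := ⟨fun _ => false, by simp [AV]⟩

noncomputable def φf (x : Fin n → Bool) : ℝ :=
  (AV t0).inf' (AV_nonempty t0) fun w => ((univ.filter fun i => x i ≠ row β w i).card : ℝ)

lemma hd_triangle (x y z : Fin n → Bool) :
    ((univ.filter fun i => x i ≠ z i).card : ℝ)
      ≤ ((univ.filter fun i => x i ≠ y i).card : ℝ)
        + ((univ.filter fun i => y i ≠ z i).card : ℝ) := by
  have hsub : (univ.filter fun i => x i ≠ z i)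
      ⊆ (univ.filter fun i => x i ≠ y i) ∪ (univ.filter fun i => y i ≠ z i) := by
    intro i hi
    simp only [Finset.mem_filter, Finset.mem_union, Finset.mem_univ, true_and] at *
    by_contra h
    push_neg at h
    exact hi (h.1.trans h.2)
  calc ((univ.filter fun i => x i ≠ z i).card : ℝ)
      ≤ (((univ.filter fun i => x i ≠ y i) ∪ (univ.filter fun i => y i ≠ z i)).card : ℝ) := by
        exact_mod_cast Finset.card_le_card hsub
    _ ≤ _ := by exact_mod_cast Finset.card_union_le _ _

lemma phi_le (x y : Fin n → Bool) :
    φf β t0 x ≤ ((univ.filter fun i => x i ≠ y i).card : ℝ) + φf β t0 y := by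
  obtain ⟨w, hw, hEq⟩ := Finset.exists_mem_eq_inf' (AV_nonempty t0)
    (fun w => ((univ.filter fun i => y i ≠ row β w i).card : ℝ))
  calc φf β t0 x ≤ ((univ.filter fun i => x i ≠ row β w i).card : ℝ) :=
        Finset.inf'_le _ hw
    _ ≤ ((univ.filter fun i => x i ≠ y i).card : ℝ)
          + ((univ.filter fun i => y i ≠ row β w i).card : ℝ) := hd_triangle x y _
    _ = _ := by rw [φf, ← hEq]

lemma phi_lip (x y : Fin n → Bool) :
    |φf β t0 x - φf β t0 y| ≤ ((univ.filter fun i => x i ≠ y i).card : ℝ) := by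
  rw [abs_sub_le_iff]
  constructor
  · linarith [phi_le β t0 x y]
  · have h := phi_le β t0 y x
    have : (univ.filter fun i => y i ≠ x i) = univ.filter fun i => x i ≠ y i := by
      apply Finset.filter_congr
      intro i _
      simp [ne_comm]
    rw [this] at h
    linarith

lemma ne_decide_iff (a v w : Fin k → Bool) :
    (decide (ip a v = 1) ≠ decide (ip a w = 1)) ↔ ip a (fun t => xor (v t) (w t)) = 1 := by
  rw [ip_xor]
  rcases zmod2_cases (ip a v) with h | h <;> rcases zmod2_cases (ip a w) with h' | h' <;>
    simp [h, h'] <;> decide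

lemma hd_row (v w : Fin k → Bool) (hvw : v ≠ w) :
    ((univ.filter fun i => row β v i ≠ row β w i).card : ℝ) = 2 ^ k / 2 := by
  have hpred : ∀ i : Fin n, (row β v i ≠ row β w i)
      ↔ ip (fun t => xor (v t) (w t)) (β i) = 1 := by
    intro i
    rw [← ip_comm]
    exact ne_decide_iff (β i) v w
  have h1 : ((univ.filter fun i => row β v i ≠ row β w i).card : ℝ)
      = ∑ i : Fin n, if ip (fun t => xor (v t) (w t)) (β i) = 1 then (1:ℝ) else 0 := by
    rw [Finset.card_filter]
    push_cast
    refine Finset.sum_congr rfl fun i _ => ?_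
    by_cases h : row β v i ≠ row β w i
    · rw [if_pos h, if_pos ((hpred i).mp h)]
    · rw [if_neg h, if_neg fun c => h ((hpred i).mpr c)]
  rw [h1, Fintype.sum_equiv β _ (fun x => if ip (fun t => xor (v t) (w t)) x = 1 then (1:ℝ) else 0)
    (fun i => rfl)]
  exact cnt_marginal (xor_ne_zero hvw) 1

lemma phi_row_A (v : Fin k → Bool) (hv : v t0 = false) : φf β t0 (row β v) = 0 := by
  apply le_antisymm
  · have hmem : v ∈ AV t0 := by simp [AV, hv]
    refine le_trans (Finset.inf'_le
      (fun w => ((univ.filter fun i => row β v i ≠ row β w i).card : ℝ)) hmem) ?_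
    simp
  · apply Finset.le_inf'
    intro w _
    positivity

lemma phi_row_B (v : Fin k → Bool) (hv : v t0 = true) : φf β t0 (row β v) = 2 ^ k / 2 := by
  have hval : ∀ w ∈ AV t0,
      ((univ.filter fun i => row β v i ≠ row β w i).card : ℝ) = 2 ^ k / 2 := by
    intro w hw
    have hwt : w t0 = false := (Finset.mem_filter.mp hw).2
    exact hd_row β v w (fun h => by rw [h, hwt] at hv; exact Bool.false_ne_true hv)
  apply le_antisymm
  · have hmem : (fun _ => false : Fin k → Bool) ∈ AV t0 := by simp [AV]
    calc φf β t0 (row β v) ≤ _ := Finset.inf'_le _ hmem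
      _ = 2 ^ k / 2 := hval _ hmem
  · apply Finset.le_inf'
    intro w hw
    rw [hval w hw]

lemma cardAc : ((univ.filter fun v : Fin k → Bool => ¬ v t0 = false).card : ℝ) = 2 ^ k / 2 := by
  have hbij : (univ.filter fun v : Fin k → Bool => v t0 = false).card
      = (univ.filter fun v : Fin k → Bool => ¬ v t0 = false).card := by
    apply Finset.card_bij (fun v _ => Function.update v t0 (!v t0))
    · intro v hv
      simp only [Finset.mem_filter, Finset.mem_univ, true_and] at *
      simp [hv]
    · intro v hv w hw hEq
      simp only [Finset.mem_filter, Finset.mem_univ, true_and] at hv hw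
      funext t
      by_cases ht : t = t0
      · subst ht; rw [hv, hw]
      · have := congrFun hEq t
        rwa [Function.update_of_ne ht, Function.update_of_ne ht] at this
    · intro w hw
      simp only [Finset.mem_filter, Finset.mem_univ, true_and] at hw
      refine ⟨Function.update w t0 (!w t0), ?_, ?_⟩
      · simp only [Finset.mem_filter, Finset.mem_univ, true_and, Function.update_self]
        cases hwt : w t0
        · exact absurd hwt hw
        · simp
      · funext t
        by_cases ht : t = t0
        · rw [ht, Function.update_self]
          cases hwt : w t0
          · exact absurd hwt hw
          · simp
        · simp [Function.update_of_ne ht]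
  have htot := Finset.card_filter_add_card_filter_not
    (s := (univ : Finset (Fin k → Bool))) (fun v => v t0 = false)
  rw [card_univ_fun, hbij] at htot
  have h2 : 2 * (univ.filter fun v : Fin k → Bool => ¬ v t0 = false).card = 2 ^ k := by rw [two_mul]; exact htot
  have h3 : ((2 * (univ.filter fun v : Fin k → Bool => ¬ v t0 = false).card : ℕ) : ℝ)
      = ((2 ^ k : ℕ) : ℝ) := by rw [h2]
  push_cast at h3
  linarith

lemma sum_split (f : (Fin k → Bool) → ℝ) (C : ℝ)
    (h0 : ∀ v, v t0 = false → f v = 0) (hc : ∀ v, v t0 = true → f v = C) :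
    ∑ v : Fin k → Bool, f v = (2 ^ k / 2) * C := by
  rw [← Finset.sum_filter_add_sum_filter_not univ (fun v => v t0 = false)]
  have hA : ∑ v ∈ univ.filter fun v : Fin k → Bool => v t0 = false, f v = 0 :=
    Finset.sum_eq_zero fun v hv => h0 v (Finset.mem_filter.mp hv).2
  have hB : ∑ v ∈ univ.filter fun v : Fin k → Bool => ¬ v t0 = false, f v
      = ((univ.filter fun v : Fin k → Bool => ¬ v t0 = false).card : ℝ) * C := by
    rw [Finset.sum_congr rfl fun v hv => hc v ?_, Finset.sum_const, nsmul_eq_mul]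
    have := (Finset.mem_filter.mp hv).2
    cases hvt : v t0
    · exact absurd hvt this
    · rfl
  rw [hA, hB, cardAc, zero_add]

end Stmt16

open Finset

open Stmt16

/-- Pairwise negative correlation (indeed pairwise independence) does not imply
concentration: for infinitely many `n` there exist pairwise independent `{0,1}`-valued
random variables `X₁,…,Xₙ` and a `1`-Hamming-Lipschitz function `φ` with
`Var[φ(X)] ≥ c n²` for a universal constant `c > 0`. -/
theorem stmt16 :
    ∃ c : ℝ, 0 < c ∧ ∀ N : ℕ, ∃ n : ℕ, N ≤ n ∧
      ∃ ν : (Fin n → Bool) → ℝ,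
        (∀ σ, 0 ≤ ν σ) ∧ (∑ σ : Fin n → Bool, ν σ = 1) ∧
        -- pairwise independence of the coordinates (hence pairwise non-positive correlation)
        (∀ i j, i ≠ j → ∀ a b : Bool,
          (∑ σ : Fin n → Bool, if σ i = a ∧ σ j = b then ν σ else 0) =
            (∑ σ : Fin n → Bool, if σ i = a then ν σ else 0) *
              (∑ σ : Fin n → Bool, if σ j = b then ν σ else 0)) ∧
        ∃ φ : (Fin n → Bool) → ℝ,
          -- φ is 1-Hamming-Lipschitz
          (∀ x y : Fin n → Bool,
            |φ x - φ y| ≤ (Finset.univ.filter fun i => x i ≠ y i).card) ∧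
          -- but the variance of φ is of order n²
          c * (n : ℝ) ^ 2 ≤
            (∑ σ : Fin n → Bool, ν σ * (φ σ) ^ 2) - (∑ σ : Fin n → Bool, ν σ * φ σ) ^ 2 := by
  refine ⟨1/16, by norm_num, fun N => ?_⟩
  set k := N + 1 with hk
  have hcard : Fintype.card (Fin k → Bool) = 2 ^ k := by simp
  let β : Fin (2 ^ k) ≃ (Fin k → Bool) := (Fintype.equivFinOfCardEq hcard).symm
  let t0 : Fin k := ⟨0, Nat.succ_pos N⟩
  refine ⟨2 ^ k, ?_, nu β, nu_nonneg β, nu_sum β, indep β, φf β t0, phi_lip β t0, ?_⟩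
  · calc N ≤ 2 ^ N := Nat.le_of_lt (Nat.lt_two_pow_self (n := N))
      _ ≤ 2 ^ k := Nat.pow_le_pow_right (by norm_num) (Nat.le_succ N)
  · have hE1 : ∑ σ : Fin (2 ^ k) → Bool, nu β σ * φf β t0 σ = 2 ^ k / 4 := by
      rw [transfer β (φf β t0),
        sum_split t0 (fun v => φf β t0 (row β v)) (2 ^ k / 2)
          (fun v hv => phi_row_A β t0 v hv) (fun v hv => phi_row_B β t0 v hv)]
      have : (2:ℝ) ^ k ≠ 0 := by positivity
      field_simp
      ring
    have hE2 : ∑ σ : Fin (2 ^ k) → Bool, nu β σ * (φf β t0 σ) ^ 2 = ((2:ℝ) ^ k) ^ 2 / 8 := by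
      rw [transfer β (fun σ => (φf β t0 σ) ^ 2),
        sum_split t0 (fun v => (φf β t0 (row β v)) ^ 2) ((2 ^ k / 2) ^ 2)
          (fun v hv => by rw [phi_row_A β t0 v hv]; ring)
          (fun v hv => by rw [phi_row_B β t0 v hv])]
      have : (2:ℝ) ^ k ≠ 0 := by positivity
      field_simp
      ring
    rw [hE1, hE2]
    have hcast : ((2 ^ k : ℕ) : ℝ) = 2 ^ k := by push_cast; ring
    rw [hcast]
    ring_nf
    nlinarith [pow_pos (by norm_num : (0:ℝ) < 2) k]
end

section
/- Log-concavity of the generating polynomial condition: a probability measure ν on subsets of [n] (identified with {-1,1}^n via Xᵢ = 2·1_{i∈A} − 1) has log-concave generating polynomial p_ν(z) = E[Π_{i∈A} zᵢ] on the positive orthant if and only if ∇²L[ν](x) ⪯ 2(diag(∇L[ν](x)) + Id) for all x ∈ ℝ^n. In particular, since ∇L[ν](x) ∈ [-1,1]^n, this condition implies that ν is 4-semi-log-concave. -/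
open Finset

/-- The generating polynomial `p_ν(z) = E[∏_{i ∈ A} zᵢ]`, where `i ∈ A ↔ Xᵢ = 1`. -/
noncomputable def genPoly {n : ℕ} (ν : (Fin n → Bool) → ℝ) (z : Fin n → ℝ) : ℝ :=
  ∑ σ : Fin n → Bool, ν σ * ∏ i, (if σ i then z i else 1)

namespace St18

variable {n : ℕ}

/-- linear functional `u ↦ ∑ i, v i * u i` as a CLM -/
noncomputable def lf (v : Fin n → ℝ) : (Fin n → ℝ) →L[ℝ] ℝ :=
  ∑ i, v i • ContinuousLinearMap.proj i

lemma lf_apply (v u : Fin n → ℝ) : lf v u = ∑ i, v i * u i := by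
  simp [lf, ContinuousLinearMap.sum_apply]

lemma lf_single (v : Fin n → ℝ) (i : Fin n) : lf v (Pi.single i 1) = v i := by
  rw [lf_apply]
  simp [Pi.single_apply]

lemma hasFDerivAt_lin (v x : Fin n → ℝ) :
    HasFDerivAt (fun y : Fin n → ℝ => ∑ i, y i * v i) (lf v) x := by
  apply HasFDerivAt.fun_sum
  intro i _
  exact (ContinuousLinearMap.proj i :
    (Fin n → ℝ) →L[ℝ] ℝ).hasFDerivAt.mul_const (v i)

noncomputable def Ex (x : Fin n → ℝ) (σ : Fin n → Bool) : ℝ := Real.exp (∑ i, x i * vec σ i)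

noncomputable def G (c : (Fin n → Bool) → ℝ) (x : Fin n → ℝ) : ℝ := ∑ σ, c σ * Ex x σ

lemma hasFDerivAt_G (c : (Fin n → Bool) → ℝ) (x : Fin n → ℝ) :
    HasFDerivAt (G c) (∑ σ, (c σ * Ex x σ) • lf (vec σ)) x := by
  apply HasFDerivAt.fun_sum
  intro σ _
  have h1 : HasFDerivAt (fun y : Fin n → ℝ => Ex y σ) (Ex x σ • lf (vec σ)) x :=
    (hasFDerivAt_lin (vec σ) x).exp
  have h2 := h1.const_mul (c σ)
  rw [smul_smul] at h2
  exact h2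

lemma pderiv'_G (c : (Fin n → Bool) → ℝ) (x : Fin n → ℝ) (i : Fin n) :
    pderiv' (G c) i x = G (fun σ => c σ * vec σ i) x := by
  rw [pderiv', (hasFDerivAt_G c x).fderiv]
  simp only [ContinuousLinearMap.sum_apply, ContinuousLinearMap.smul_apply, lf_single,
    smul_eq_mul, G]
  exact Finset.sum_congr rfl fun σ _ => by ring

variable {n : ℕ} {ν : (Fin n → Bool) → ℝ}

lemma exists_pos (hν0 : ∀ σ, 0 ≤ ν σ) (hν1 : ∑ σ : Fin n → Bool, ν σ = 1) :
    ∃ σ, 0 < ν σ := by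
  by_contra h
  push_neg at h
  have : ∑ σ : Fin n → Bool, ν σ = 0 :=
    Finset.sum_eq_zero fun σ _ => le_antisymm (h σ) (hν0 σ)
  rw [hν1] at this
  norm_num at this

lemma G_pos (hν0 : ∀ σ, 0 ≤ ν σ) (hν1 : ∑ σ : Fin n → Bool, ν σ = 1) (x : Fin n → ℝ) :
    0 < G ν x := by
  obtain ⟨σ₀, hσ₀⟩ := exists_pos hν0 hν1
  apply Finset.sum_pos'
  · intro σ _
    exact mul_nonneg (hν0 σ) (Real.exp_pos _).le
  · exact ⟨σ₀, Finset.mem_univ _, mul_pos hσ₀ (Real.exp_pos _)⟩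

lemma LL_eq : LL ν = fun x => Real.log (G ν x) := rfl

lemma pderiv'_LL (hν0 : ∀ σ, 0 ≤ ν σ) (hν1 : ∑ σ : Fin n → Bool, ν σ = 1)
    (x : Fin n → ℝ) (j : Fin n) :
    pderiv' (LL ν) j x = G (fun σ => ν σ * vec σ j) x / G ν x := by
  have h := (hasFDerivAt_G ν x).log (G_pos hν0 hν1 x).ne'
  rw [pderiv', LL_eq, h.fderiv]
  simp only [ContinuousLinearMap.smul_apply, ContinuousLinearMap.sum_apply,
    lf_single, smul_eq_mul, G]
  rw [div_eq_inv_mul]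
  congr 1
  exact Finset.sum_congr rfl fun σ _ => by ring

lemma hasFDerivAt_div' {f g : (Fin n → ℝ) → ℝ} {f' g' : (Fin n → ℝ) →L[ℝ] ℝ}
    {x : Fin n → ℝ} (hf : HasFDerivAt f f' x) (hg : HasFDerivAt g g' x) (h : g x ≠ 0) :
    HasFDerivAt (fun y => f y / g y)
      ((g x)⁻¹ • f' + (-(f x) * ((g x) ^ 2)⁻¹) • g') x := by
  have hinv : HasFDerivAt (fun y => (g y)⁻¹) ((-((g x) ^ 2)⁻¹) • g') x :=
    (hasDerivAt_inv h).comp_hasFDerivAt x hg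
  have hm := hf.fun_mul hinv
  simp only [div_eq_mul_inv]
  refine hm.congr_fderiv ?_
  ext u
  simp only [ContinuousLinearMap.add_apply, ContinuousLinearMap.smul_apply, smul_eq_mul]
  ring

lemma hess_LL (hν0 : ∀ σ, 0 ≤ ν σ) (hν1 : ∑ σ : Fin n → Bool, ν σ = 1)
    (x : Fin n → ℝ) (i j : Fin n) :
    hess (LL ν) x i j =
      (G (fun σ => ν σ * vec σ j * vec σ i) x * G ν x
        - G (fun σ => ν σ * vec σ j) x * G (fun σ => ν σ * vec σ i) x) / (G ν x) ^ 2 := by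
  have hfun : (pderiv' (LL ν) j) = fun y => G (fun σ => ν σ * vec σ j) y / G ν y :=
    funext fun y => pderiv'_LL hν0 hν1 y j
  have hd := hasFDerivAt_div' (hasFDerivAt_G (fun σ => ν σ * vec σ j) x)
    (hasFDerivAt_G ν x) (G_pos hν0 hν1 x).ne'
  rw [hess, pderiv', hfun, hd.fderiv]
  simp only [ContinuousLinearMap.add_apply, ContinuousLinearMap.smul_apply,
    ContinuousLinearMap.sum_apply, lf_single, smul_eq_mul]
  have e1 : (∑ σ : Fin n → Bool, (ν σ * vec σ j * Ex x σ) * vec σ i)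
      = G (fun σ => ν σ * vec σ j * vec σ i) x := by
    rw [G]; exact Finset.sum_congr rfl fun σ _ => by ring
  have e2 : (∑ σ : Fin n → Bool, ν σ * Ex x σ * vec σ i)
      = G (fun σ => ν σ * vec σ i) x := by
    rw [G]; exact Finset.sum_congr rfl fun σ _ => by ring
  rw [e1, e2]
  have hS := (G_pos hν0 hν1 x).ne'
  field_simp
  ring

variable {n : ℕ} {ν : (Fin n → Bool) → ℝ}

noncomputable def Pm (s : Finset (Fin n)) (z : Fin n → ℝ) : ℝ := ∏ i ∈ s, z i

def sof (σ : Fin n → Bool) : Finset (Fin n) := Finset.univ.filter (fun i => σ i = true)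

lemma mem_sof {σ : Fin n → Bool} {i : Fin n} : i ∈ sof σ ↔ σ i = true := by
  simp [sof]

lemma Mon_eq (σ : Fin n → Bool) (z : Fin n → ℝ) :
    (∏ i, (if σ i then z i else 1)) = Pm (sof σ) z :=
  (Finset.prod_filter _ _).symm

noncomputable def GP (c : (Fin n → Bool) → ℝ) (z : Fin n → ℝ) : ℝ := ∑ σ, c σ * Pm (sof σ) z

lemma genPoly_eq (z : Fin n → ℝ) : genPoly ν z = GP ν z :=
  Finset.sum_congr rfl fun σ _ => by rw [Mon_eq]

noncomputable def Dpm (s : Finset (Fin n)) (z : Fin n → ℝ) : (Fin n → ℝ) →L[ℝ] ℝ :=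
  ∑ i ∈ s, (Pm (s.erase i) z) • ContinuousLinearMap.proj i

lemma hasFDerivAt_Pm (s : Finset (Fin n)) (z : Fin n → ℝ) :
    HasFDerivAt (Pm s) (Dpm s z) z :=
  HasFDerivAt.finset_prod fun i _ => (ContinuousLinearMap.proj i :
    (Fin n → ℝ) →L[ℝ] ℝ).hasFDerivAt

lemma Dpm_single (s : Finset (Fin n)) (z : Fin n → ℝ) (i : Fin n) :
    Dpm s z (Pi.single i 1) = if i ∈ s then Pm (s.erase i) z else 0 := by
  simp only [Dpm, ContinuousLinearMap.sum_apply, ContinuousLinearMap.smul_apply,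
    ContinuousLinearMap.proj_apply, Pi.single_apply, smul_eq_mul, mul_ite, mul_one, mul_zero]
  rw [Finset.sum_ite_eq' s i (fun j => Pm (s.erase j) z)]

lemma hasFDerivAt_GP (c : (Fin n → Bool) → ℝ) (z : Fin n → ℝ) :
    HasFDerivAt (GP c) (∑ σ, c σ • Dpm (sof σ) z) z :=
  HasFDerivAt.fun_sum fun σ _ => (hasFDerivAt_Pm (sof σ) z).const_mul (c σ)

noncomputable def F1 (c : (Fin n → Bool) → ℝ) (j : Fin n) (z : Fin n → ℝ) : ℝ :=
  ∑ σ, c σ * (if j ∈ sof σ then Pm ((sof σ).erase j) z else 0)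

lemma pderiv'_GP (c : (Fin n → Bool) → ℝ) (z : Fin n → ℝ) (j : Fin n) :
    pderiv' (GP c) j z = F1 c j z := by
  rw [pderiv', (hasFDerivAt_GP c z).fderiv]
  simp only [ContinuousLinearMap.sum_apply, ContinuousLinearMap.smul_apply, Dpm_single,
    smul_eq_mul, F1]

lemma hasFDerivAt_F1 (c : (Fin n → Bool) → ℝ) (j : Fin n) (z : Fin n → ℝ) :
    HasFDerivAt (F1 c j)
      (∑ σ, (c σ * (if j ∈ sof σ then 1 else 0)) • Dpm ((sof σ).erase j) z) z := by
  apply HasFDerivAt.fun_sum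
  intro σ _
  by_cases h : j ∈ sof σ
  · simp only [h, if_true, mul_one]
    exact (hasFDerivAt_Pm _ z).const_mul (c σ)
  · simp only [h, if_false, mul_zero, zero_smul]
    exact hasFDerivAt_const _ _

lemma pderiv'_F1 (c : (Fin n → Bool) → ℝ) (j : Fin n) (z : Fin n → ℝ) (i : Fin n) :
    pderiv' (F1 c j) i z = ∑ σ, (c σ * (if j ∈ sof σ then 1 else 0)) *
      (if i ∈ (sof σ).erase j then Pm (((sof σ).erase j).erase i) z else 0) := by
  rw [pderiv', (hasFDerivAt_F1 c j z).fderiv]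
  simp only [ContinuousLinearMap.sum_apply, ContinuousLinearMap.smul_apply, Dpm_single,
    smul_eq_mul]

lemma Pm_pos {z : Fin n → ℝ} (hz : ∀ i, 0 < z i) (s : Finset (Fin n)) : 0 < Pm s z :=
  Finset.prod_pos fun i _ => hz i

lemma GP_pos (hν0 : ∀ σ, 0 ≤ ν σ) (hν1 : ∑ σ : Fin n → Bool, ν σ = 1)
    {z : Fin n → ℝ} (hz : ∀ i, 0 < z i) : 0 < GP ν z := by
  obtain ⟨σ₀, hσ₀⟩ := exists_pos hν0 hν1
  apply Finset.sum_pos'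
  · exact fun σ _ => mul_nonneg (hν0 σ) (Pm_pos hz _).le
  · exact ⟨σ₀, Finset.mem_univ _, mul_pos hσ₀ (Pm_pos hz _)⟩

lemma pderiv'_logGP (hν0 : ∀ σ, 0 ≤ ν σ) (hν1 : ∑ σ : Fin n → Bool, ν σ = 1)
    {z : Fin n → ℝ} (hz : ∀ i, 0 < z i) (j : Fin n) :
    pderiv' (fun y => Real.log (genPoly ν y)) j z = F1 ν j z / GP ν z := by
  have hfun : (fun y : Fin n → ℝ => Real.log (genPoly ν y))
      = fun y => Real.log (GP ν y) := funext fun y => by rw [genPoly_eq]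
  have h := (hasFDerivAt_GP ν z).log (GP_pos hν0 hν1 hz).ne'
  rw [pderiv', hfun, h.fderiv]
  simp only [ContinuousLinearMap.smul_apply, ContinuousLinearMap.sum_apply,
    ContinuousLinearMap.smul_apply, Dpm_single, smul_eq_mul]
  rw [div_eq_inv_mul, F1]

lemma isOpen_orth : IsOpen {z : Fin n → ℝ | ∀ i, 0 < z i} := by
  have : {z : Fin n → ℝ | ∀ i, 0 < z i} = ⋂ i, {z : Fin n → ℝ | 0 < z i} := by
    ext z; simp
  rw [this]
  exact isOpen_iInter_of_finite fun i => isOpen_lt continuous_const (continuous_apply i)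

lemma hess_logGP (hν0 : ∀ σ, 0 ≤ ν σ) (hν1 : ∑ σ : Fin n → Bool, ν σ = 1)
    {z : Fin n → ℝ} (hz : ∀ i, 0 < z i) (i j : Fin n) :
    hess (fun y => Real.log (genPoly ν y)) z i j =
      (GP ν z)⁻¹ * (∑ σ, (ν σ * (if j ∈ sof σ then 1 else 0)) *
          (if i ∈ (sof σ).erase j then Pm (((sof σ).erase j).erase i) z else 0))
        + (-(F1 ν j z) * ((GP ν z) ^ 2)⁻¹) * F1 ν i z := by
  have hev : (pderiv' (fun y => Real.log (genPoly ν y)) j)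
      =ᶠ[nhds z] fun y => F1 ν j y / GP ν y := by
    filter_upwards [isOpen_orth.mem_nhds hz] with y hy
    exact pderiv'_logGP hν0 hν1 hy j
  have hd := hasFDerivAt_div' (hasFDerivAt_F1 ν j z) (hasFDerivAt_GP ν z)
    (GP_pos hν0 hν1 hz).ne'
  rw [hess, pderiv', hev.fderiv_eq, hd.fderiv]
  simp only [ContinuousLinearMap.add_apply, ContinuousLinearMap.smul_apply,
    ContinuousLinearMap.sum_apply, Dpm_single, smul_eq_mul, F1]

variable {n : ℕ} {ν : (Fin n → Bool) → ℝ}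

noncomputable def bi (σ : Fin n → Bool) (i : Fin n) : ℝ := if σ i then 1 else 0

lemma Mon_exp (σ : Fin n → Bool) (x : Fin n → ℝ) :
    Pm (sof σ) (fun k => Real.exp (2 * x k)) = Real.exp (∑ k, x k) * Ex x σ := by
  rw [Pm, Ex, ← Real.exp_sum, ← Real.exp_add]
  congr 1
  rw [sof, Finset.sum_filter, ← Finset.sum_add_distrib]
  apply Finset.sum_congr rfl
  intro k _
  by_cases h : σ k <;> simp [vec, h] <;> ring

lemma Pm_erase {s : Finset (Fin n)} {i : Fin n} (h : i ∈ s) {z : Fin n → ℝ}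
    (hzi : z i ≠ 0) : Pm (s.erase i) z = Pm s z / z i := by
  rw [eq_div_iff hzi, mul_comm, Pm, Pm]
  exact Finset.mul_prod_erase s z h

lemma GP_exp (x : Fin n → ℝ) :
    GP ν (fun k => Real.exp (2 * x k)) = Real.exp (∑ k, x k) * G ν x := by
  rw [GP, G, Finset.mul_sum]
  exact Finset.sum_congr rfl fun σ _ => by rw [Mon_exp]; ring

lemma F1_exp (x : Fin n → ℝ) (i : Fin n) :
    F1 ν i (fun k => Real.exp (2 * x k)) =
      Real.exp (∑ k, x k) * G (fun σ => ν σ * bi σ i) x / Real.exp (2 * x i) := by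
  rw [F1, G, Finset.mul_sum, Finset.sum_div]
  apply Finset.sum_congr rfl
  intro σ _
  by_cases h : i ∈ sof σ
  · have hb : σ i = true := mem_sof.mp h
    rw [Pm_erase h (Real.exp_ne_zero _), Mon_exp]
    simp only [h, if_true, bi, hb]
    ring
  · have hb : ¬ (σ i = true) := fun hc => h (mem_sof.mpr hc)
    simp only [h, if_false, bi, hb, mul_zero, zero_mul, mul_one]
    simp [hb]

lemma D2_diag (c : (Fin n → Bool) → ℝ) (z : Fin n → ℝ) (j : Fin n) :
    (∑ σ : Fin n → Bool, (c σ * (if j ∈ sof σ then 1 else 0)) *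
      (if j ∈ (sof σ).erase j then Pm (((sof σ).erase j).erase j) z else 0)) = 0 := by
  apply Finset.sum_eq_zero
  intro σ _
  simp [Finset.notMem_erase]

lemma D2_exp (x : Fin n → ℝ) {i j : Fin n} (hij : i ≠ j) :
    (∑ σ : Fin n → Bool, (ν σ * (if j ∈ sof σ then 1 else 0)) *
        (if i ∈ (sof σ).erase j then
          Pm (((sof σ).erase j).erase i) (fun k => Real.exp (2 * x k)) else 0)) =
      Real.exp (∑ k, x k) * G (fun σ => ν σ * bi σ i * bi σ j) x /
        (Real.exp (2 * x i) * Real.exp (2 * x j)) := by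
  rw [G, Finset.mul_sum, Finset.sum_div]
  apply Finset.sum_congr rfl
  intro σ _
  by_cases hj : j ∈ sof σ
  · by_cases hi : i ∈ sof σ
    · have hie : i ∈ (sof σ).erase j := Finset.mem_erase.mpr ⟨hij, hi⟩
      rw [Pm_erase hie (Real.exp_ne_zero _), Pm_erase hj (Real.exp_ne_zero _), Mon_exp]
      simp only [hj, hie, if_true, bi, mem_sof.mp hj, mem_sof.mp hi]
      ring
    · have hie : i ∉ (sof σ).erase j := fun hc => hi (Finset.mem_erase.mp hc).2
      have hbi : ¬ (σ i = true) := fun hc => hi (mem_sof.mpr hc)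
      simp [hie, bi, hbi]
  · have hbj : ¬ (σ j = true) := fun hc => hj (mem_sof.mpr hc)
    simp [hj, bi, hbj]

lemma G_bi (x : Fin n → ℝ) (i : Fin n) :
    G (fun σ => ν σ * bi σ i) x =
      (G (fun σ => ν σ * vec σ i) x + G ν x) / 2 := by
  have h : ∀ σ : Fin n → Bool, (ν σ * bi σ i) * Ex x σ
      = ((ν σ * vec σ i) * Ex x σ + ν σ * Ex x σ) / 2 := by
    intro σ; by_cases h : σ i <;> simp [bi, vec, h] <;> ring
  rw [G, G, G, ← Finset.sum_add_distrib, Finset.sum_div]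
  exact Finset.sum_congr rfl fun σ _ => h σ

lemma G_bibj (x : Fin n → ℝ) (i j : Fin n) :
    G (fun σ => ν σ * bi σ i * bi σ j) x =
      (G (fun σ => ν σ * vec σ j * vec σ i) x + G (fun σ => ν σ * vec σ i) x
        + G (fun σ => ν σ * vec σ j) x + G ν x) / 4 := by
  have h : ∀ σ : Fin n → Bool, (ν σ * bi σ i * bi σ j) * Ex x σ
      = ((ν σ * vec σ j * vec σ i) * Ex x σ + (ν σ * vec σ i) * Ex x σ
        + (ν σ * vec σ j) * Ex x σ + ν σ * Ex x σ) / 4 := by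
    intro σ
    by_cases hi : σ i <;> by_cases hj : σ j <;> simp [bi, vec, hi, hj] <;> ring
  rw [G, G, G, G, G, ← Finset.sum_add_distrib, ← Finset.sum_add_distrib,
    ← Finset.sum_add_distrib, Finset.sum_div]
  exact Finset.sum_congr rfl fun σ _ => h σ

lemma G_vv_diag (x : Fin n → ℝ) (i : Fin n) :
    G (fun σ => ν σ * vec σ i * vec σ i) x = G ν x := by
  rw [G, G]
  apply Finset.sum_congr rfl
  intro σ _
  by_cases h : σ i <;> simp [vec, h]

variable {n : ℕ} {ν : (Fin n → Bool) → ℝ}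

lemma key_term (hν0 : ∀ σ, 0 ≤ ν σ) (hν1 : ∑ σ : Fin n → Bool, ν σ = 1)
    (x u : Fin n → ℝ) (i j : Fin n) :
    (u i * Real.exp (2 * x i)) *
        hess (fun y => Real.log (genPoly ν y)) (fun k => Real.exp (2 * x k)) i j *
        (u j * Real.exp (2 * x j))
      = u i * hess (LL ν) x i j * u j / 4
        - (if j = i then (pderiv' (LL ν) i x + 1) * u i ^ 2 / 2 else 0) := by
  have hz : ∀ k, (0:ℝ) < (fun k => Real.exp (2 * x k)) k := fun k => Real.exp_pos _
  have hS := (G_pos hν0 hν1 x).ne'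
  have hE := Real.exp_ne_zero (∑ k, x k)
  rw [hess_logGP hν0 hν1 hz i j, hess_LL hν0 hν1 x i j, pderiv'_LL hν0 hν1 x i]
  rcases eq_or_ne j i with rfl | hij
  · rw [D2_diag, GP_exp, F1_exp, G_bi, G_vv_diag, if_pos rfl]
    have hz1 := Real.exp_ne_zero (2 * x j)
    field_simp
    ring
  · rw [D2_exp x hij.symm, GP_exp, F1_exp, F1_exp, G_bibj, G_bi, G_bi, if_neg hij]
    have hz1 := Real.exp_ne_zero (2 * x i)
    have hz2 := Real.exp_ne_zero (2 * x j)
    field_simp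
    ring

lemma key (hν0 : ∀ σ, 0 ≤ ν σ) (hν1 : ∑ σ : Fin n → Bool, ν σ = 1)
    (x u : Fin n → ℝ) :
    (∑ i, ∑ j, (u i * Real.exp (2 * x i)) *
        hess (fun y => Real.log (genPoly ν y)) (fun k => Real.exp (2 * x k)) i j *
        (u j * Real.exp (2 * x j)))
      = (∑ i, ∑ j, u i * hess (LL ν) x i j * u j) / 4
        - ((∑ i, pderiv' (LL ν) i x * u i ^ 2) + ∑ i, u i ^ 2) / 2 := by
  have h1 : ∀ i : Fin n, (∑ j, (u i * Real.exp (2 * x i)) *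
      hess (fun y => Real.log (genPoly ν y)) (fun k => Real.exp (2 * x k)) i j *
      (u j * Real.exp (2 * x j)))
      = (∑ j, u i * hess (LL ν) x i j * u j) / 4
        - (pderiv' (LL ν) i x + 1) * u i ^ 2 / 2 := by
    intro i
    have h2 : (pderiv' (LL ν) i x + 1) * u i ^ 2 / 2
        = ∑ j : Fin n, (if j = i then (pderiv' (LL ν) i x + 1) * u i ^ 2 / 2 else 0) := by
      rw [Finset.sum_ite_eq' Finset.univ i]
      simp
    rw [Finset.sum_div, h2, ← Finset.sum_sub_distrib]
    exact Finset.sum_congr rfl fun j _ => key_term hν0 hν1 x u i j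
  calc (∑ i, ∑ j, (u i * Real.exp (2 * x i)) *
        hess (fun y => Real.log (genPoly ν y)) (fun k => Real.exp (2 * x k)) i j *
        (u j * Real.exp (2 * x j)))
      = ∑ i, ((∑ j, u i * hess (LL ν) x i j * u j) / 4
          - (pderiv' (LL ν) i x + 1) * u i ^ 2 / 2) :=
        Finset.sum_congr rfl fun i _ => h1 i
    _ = (∑ i, ∑ j, u i * hess (LL ν) x i j * u j) / 4
        - ((∑ i, pderiv' (LL ν) i x * u i ^ 2) + ∑ i, u i ^ 2) / 2 := by
        rw [Finset.sum_sub_distrib, Finset.sum_div, ← Finset.sum_add_distrib,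
          Finset.sum_div]
        congr 1
        exact Finset.sum_congr rfl fun i _ => by ring

lemma pd_le_one (hν0 : ∀ σ, 0 ≤ ν σ) (hν1 : ∑ σ : Fin n → Bool, ν σ = 1)
    (x : Fin n → ℝ) (i : Fin n) : pderiv' (LL ν) i x ≤ 1 := by
  rw [pderiv'_LL hν0 hν1 x i]
  rw [div_le_one (G_pos hν0 hν1 x)]
  apply Finset.sum_le_sum
  intro σ _
  have hEx : (0:ℝ) < Ex x σ := Real.exp_pos _
  show ν σ * vec σ i * Ex x σ ≤ ν σ * Ex x σ
  by_cases h : σ i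
  · simp [vec, h]
  · have hv : vec σ i = -1 := by simp [vec, h]
    rw [hv]
    nlinarith [hν0 σ]


end St18

/-- Log-concavity of the generating polynomial on the positive orthant is equivalent to
`∇²L[ν](x) ⪯ 2(diag(∇L[ν](x)) + Id)` for all `x ∈ ℝ^n`; in particular this condition
implies that `ν` is `4`-semi-log-concave. -/
theorem stmt18 {n : ℕ} (ν : (Fin n → Bool) → ℝ)
    (hν0 : ∀ σ, 0 ≤ ν σ) (hν1 : ∑ σ : Fin n → Bool, ν σ = 1) :
    ((∀ z : Fin n → ℝ, (∀ i, 0 < z i) → ∀ u : Fin n → ℝ,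
        (∑ i, ∑ j, u i * hess (fun y => Real.log (genPoly ν y)) z i j * u j) ≤ 0)
      ↔ (∀ x : Fin n → ℝ, ∀ u : Fin n → ℝ,
        (∑ i, ∑ j, u i * hess (LL ν) x i j * u j) ≤
          2 * ((∑ i, pderiv' (LL ν) i x * (u i) ^ 2) + ∑ i, (u i) ^ 2))) ∧
    ((∀ x : Fin n → ℝ, ∀ u : Fin n → ℝ,
        (∑ i, ∑ j, u i * hess (LL ν) x i j * u j) ≤
          2 * ((∑ i, pderiv' (LL ν) i x * (u i) ^ 2) + ∑ i, (u i) ^ 2)) →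
      ∀ x : Fin n → ℝ, ∀ u : Fin n → ℝ,
        (∑ i, ∑ j, u i * hess (LL ν) x i j * u j) ≤ 4 * ∑ i, (u i) ^ 2) := by
  constructor
  · constructor
    · intro HP x u
      have h := HP (fun k => Real.exp (2 * x k)) (fun k => Real.exp_pos _)
        (fun i => u i * Real.exp (2 * x i))
      rw [St18.key hν0 hν1 x u] at h
      linarith
    · intro HL z hz u
      have hzz : ∀ k, Real.exp (2 * (Real.log (z k) / 2)) = z k := by
        intro k
        rw [show (2 : ℝ) * (Real.log (z k) / 2) = Real.log (z k) by ring,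
          Real.exp_log (hz k)]
      have key' := St18.key hν0 hν1 (fun k => Real.log (z k) / 2) (fun i => u i / z i)
      simp only [hzz] at key'
      have hmul : ∀ i, u i / z i * z i = u i := fun i => div_mul_cancel₀ _ (hz i).ne'
      simp only [hmul] at key'
      have hLL := HL (fun k => Real.log (z k) / 2) (fun i => u i / z i)
      rw [key']
      linarith
  · intro HL x u
    have h := HL x u
    have h1 : (∑ i, pderiv' (LL ν) i x * u i ^ 2) ≤ ∑ i, u i ^ 2 := by
      apply Finset.sum_le_sum
      intro i _
      have := St18.pd_le_one hν0 hν1 x i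
      nlinarith [sq_nonneg (u i)]
    linarith
end
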